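/- Let K be the field of fractions of ℚ[x₀,x₁,x₂,x₃,x₄,x₅] and let τ'₁, τ'₂, τ'₃ be the maps on K⁶ defined by: τ'₁ replaces (v₀,v₁) by ((v₂v₄+v₃v₅)/v₁, (v₂v₄+v₃v₅)/v₀); τ'₂ replaces (v₂,v₃) by ((v₁v₄+v₀v₅)/v₃, (v₁v₄+v₀v₅)/v₂); τ'₃ replaces (v₄,v₅) by ((v₀v₂+v₁v₃)/v₅, (v₀v₂+v₁v₃)/v₄); each fixes the remaining entries. Let X = (x₀,…,x₅). Then for every finite word w with letters in {1,2,3} and every index i ∈ {0,…,5}, the i-th entry v of the tuple obtained by applying the maps along w to X is a Laurent polynomial with nonnegative coefficients in x₀,…,x₅; that is, there exist a polynomial p ∈ ℚ[x₀,…,x₅] all of whose coefficients are nonnegative and natural numbers d₀,…,d₅ such that v · x₀^{d₀}x₁^{d₁}x₂^{d₂}x₃^{d₃}x₄^{d₄}x₅^{d₅} = p in K. -/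

import Mathlib

noncomputable section

/-- The polynomial ring ℚ[x₀,…,x₅]. -/
abbrev P : Type := MvPolynomial (Fin 6) ℚ

/-- K = Frac(ℚ[x₀,…,x₅]). -/
abbrev K : Type := FractionRing P

/-- The images of the variables x₀,…,x₅ in K. -/
def x (i : Fin 6) : K := algebraMap P K (MvPolynomial.X i)

/-- τ'₁ : replaces (v₀, v₁) by ((v₂v₄+v₃v₅)/v₁, (v₂v₄+v₃v₅)/v₀). -/
def tau1 (v : Fin 6 → K) : Fin 6 → K := fun k =>
  if k = 0 then (v 2 * v 4 + v 3 * v 5) / v 1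
  else if k = 1 then (v 2 * v 4 + v 3 * v 5) / v 0
  else v k

/-- τ'₂ : replaces (v₂, v₃) by ((v₁v₄+v₀v₅)/v₃, (v₁v₄+v₀v₅)/v₂). -/
def tau2 (v : Fin 6 → K) : Fin 6 → K := fun k =>
  if k = 2 then (v 1 * v 4 + v 0 * v 5) / v 3
  else if k = 3 then (v 1 * v 4 + v 0 * v 5) / v 2
  else v k

/-- τ'₃ : replaces (v₄, v₅) by ((v₀v₂+v₁v₃)/v₅, (v₀v₂+v₁v₃)/v₄). -/
def tau3 (v : Fin 6 → K) : Fin 6 → K := fun k =>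
  if k = 4 then (v 0 * v 2 + v 1 * v 3) / v 5
  else if k = 5 then (v 0 * v 2 + v 1 * v 3) / v 4
  else v k

/-- τ' indexed by Fin 3: `tau i` is τ'_{i+1}. -/
def tau : Fin 3 → (Fin 6 → K) → (Fin 6 → K)
  | 0 => tau1
  | 1 => tau2
  | 2 => tau3

/-- The initial labeled seed X = (x₀,…,x₅). -/
def X0 : Fin 6 → K := x

/-- Apply the maps τ'₍a₁₎, …, τ'₍aₙ₎ along the word `w` in left-to-right order. -/
def applyWord (w : List (Fin 3)) (v : Fin 6 → K) : Fin 6 → K :=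
  w.foldl (fun u a => tau a u) v

/-- A = (x₂x₄+x₃x₅)/(x₀x₁). -/
def A : K := (x 2 * x 4 + x 3 * x 5) / (x 0 * x 1)

/-- B = (x₁x₄+x₀x₅)/(x₂x₃). -/
def B : K := (x 1 * x 4 + x 0 * x 5) / (x 2 * x 3)

/-- C = (x₀x₂+x₁x₃)/(x₄x₅). -/
def C : K := (x 0 * x 2 + x 1 * x 3) / (x 4 * x 5)

namespace PosLaurent



/-- Polynomials with nonnegative coefficients. -/
def Pos (p : P) : Prop := ∀ m, (0:ℚ) ≤ p.coeff m

lemma Pos.add {p q : P} (hp : Pos p) (hq : Pos q) : Pos (p + q) := fun m => by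
  rw [MvPolynomial.coeff_add]; exact add_nonneg (hp m) (hq m)

lemma Pos.mul {p q : P} (hp : Pos p) (hq : Pos q) : Pos (p * q) := fun m => by
  classical
  rw [MvPolynomial.coeff_mul]
  exact Finset.sum_nonneg fun z _ => mul_nonneg (hp _) (hq _)

lemma Pos.pow {p : P} (hp : Pos p) (n : ℕ) : Pos (p ^ n) := by
  induction n with
  | zero => intro m; classical
            simp [MvPolynomial.coeff_one]
            split <;> norm_num
  | succ n ih => rw [pow_succ]; exact ih.mul hp

lemma Pos.X (i : Fin 6) : Pos (MvPolynomial.X i : P) := fun m => by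
  classical
  rw [MvPolynomial.coeff_X']
  split <;> norm_num

lemma algebraMap_injective : Function.Injective (algebraMap P K) :=
  IsFractionRing.injective P K

lemma x_ne (i : Fin 6) : x i ≠ 0 := by
  simp only [x, ne_eq, map_eq_zero_iff _ algebraMap_injective]
  exact MvPolynomial.X_ne_zero i

lemma binom_ne (a b c d : Fin 6) :
    (MvPolynomial.X a * MvPolynomial.X b + MvPolynomial.X c * MvPolynomial.X d : P) ≠ 0 := by
  intro h
  have := congrArg (MvPolynomial.eval (fun _ : Fin 6 => (1:ℚ))) h
  simp at this

lemma xbinom_ne (a b c d : Fin 6) : x a * x b + x c * x d ≠ 0 := by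
  have : x a * x b + x c * x d
      = algebraMap P K (MvPolynomial.X a * MvPolynomial.X b + MvPolynomial.X c * MvPolynomial.X d) := by
    simp [x, map_add, map_mul]
  rw [this, ne_eq, map_eq_zero_iff _ algebraMap_injective]
  exact binom_ne a b c d

lemma A_ne : A ≠ 0 := by
  rw [A]
  exact div_ne_zero (xbinom_ne 2 4 3 5) (mul_ne_zero (x_ne 0) (x_ne 1))

lemma B_ne : B ≠ 0 := by
  rw [B]
  exact div_ne_zero (xbinom_ne 1 4 0 5) (mul_ne_zero (x_ne 2) (x_ne 3))

lemma C_ne : C ≠ 0 := by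
  rw [C]
  exact div_ne_zero (xbinom_ne 0 2 1 3) (mul_ne_zero (x_ne 4) (x_ne 5))

/-- The Laurent monomial A^{c 0} B^{c 1} C^{c 2}. -/
def M (c : Fin 3 → ℤ) : K := A ^ c 0 * B ^ c 1 * C ^ c 2

lemma M_ne (c : Fin 3 → ℤ) : M c ≠ 0 :=
  mul_ne_zero (mul_ne_zero (zpow_ne_zero _ A_ne) (zpow_ne_zero _ B_ne)) (zpow_ne_zero _ C_ne)

/-- The exponent update corresponding to `tau a`. -/
def upd (a : Fin 3) (e : Fin 3 → Fin 3 → ℤ) : Fin 3 → Fin 3 → ℤ := fun i k =>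
  if i = a then (if k = a then 1 else 0) + e 0 k + e 1 k + e 2 k - 2 * e a k else e i k

/-- The state shape invariant. -/
def Good (v : Fin 6 → K) (e : Fin 3 → Fin 3 → ℤ) : Prop :=
  v 0 = x 0 * M (e 0) ∧ v 1 = x 1 * M (e 0) ∧ v 2 = x 2 * M (e 1) ∧
  v 3 = x 3 * M (e 1) ∧ v 4 = x 4 * M (e 2) ∧ v 5 = x 5 * M (e 2)

end PosLaurent
namespace PosLaurent

lemma M_split (c1 c2 c0 : Fin 3 → ℤ) :
    M (fun k => c1 k + c2 k - c0 k) = M c1 * M c2 / M c0 := by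
  simp only [M, zpow_sub₀ A_ne, zpow_add₀ A_ne, zpow_sub₀ B_ne, zpow_add₀ B_ne,
    zpow_sub₀ C_ne, zpow_add₀ C_ne]
  field_simp

lemma upd_row_self (a : Fin 3) (e : Fin 3 → Fin 3 → ℤ) :
    upd a e a = fun k => ((if k = a then 1 else 0) + e 0 k + e 1 k + e 2 k - 2 * e a k) := by
  funext k; simp [upd]

lemma upd_row_other (a i : Fin 3) (h : i ≠ a) (e : Fin 3 → Fin 3 → ℤ) :
    upd a e i = e i := by
  funext k; simp [upd, h]

lemma M_upd0 (e : Fin 3 → Fin 3 → ℤ) :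
    M (upd 0 e 0) = A * (M (e 1) * M (e 2) / M (e 0)) := by
  have h : upd 0 e 0 = fun k => ((if k = 0 then 1 else 0) + e 1 k + e 2 k - e 0 k) := by
    funext k; simp [upd]; ring
  rw [h]
  simp only [M, zpow_sub₀ A_ne, zpow_add₀ A_ne, zpow_sub₀ B_ne, zpow_add₀ B_ne,
    zpow_sub₀ C_ne, zpow_add₀ C_ne]
  norm_num [zpow_one]
  field_simp
  simp only [show ((2:Fin 3) = 0) = False from by simp, show ((2:Fin 3) = 1) = False from by simp,
    show ((1:Fin 3) = 2) = False from by simp, show ((0:Fin 3) = 2) = False from by simp,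
    if_false]
  ring

lemma M_upd1 (e : Fin 3 → Fin 3 → ℤ) :
    M (upd 1 e 1) = B * (M (e 0) * M (e 2) / M (e 1)) := by
  have h : upd 1 e 1 = fun k => ((if k = 1 then 1 else 0) + e 0 k + e 2 k - e 1 k) := by
    funext k; simp [upd]; ring
  rw [h]
  simp only [M, zpow_sub₀ A_ne, zpow_add₀ A_ne, zpow_sub₀ B_ne, zpow_add₀ B_ne,
    zpow_sub₀ C_ne, zpow_add₀ C_ne]
  norm_num [zpow_one]
  field_simp
  simp only [show ((2:Fin 3) = 0) = False from by simp, show ((2:Fin 3) = 1) = False from by simp,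
    show ((1:Fin 3) = 2) = False from by simp, show ((0:Fin 3) = 2) = False from by simp,
    if_false]
  ring

lemma M_upd2 (e : Fin 3 → Fin 3 → ℤ) :
    M (upd 2 e 2) = C * (M (e 0) * M (e 1) / M (e 2)) := by
  have h : upd 2 e 2 = fun k => ((if k = 2 then 1 else 0) + e 0 k + e 1 k - e 2 k) := by
    funext k; simp [upd]; ring
  rw [h]
  simp only [M, zpow_sub₀ A_ne, zpow_add₀ A_ne, zpow_sub₀ B_ne, zpow_add₀ B_ne,
    zpow_sub₀ C_ne, zpow_add₀ C_ne]
  norm_num [zpow_one]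
  field_simp
  simp only [show ((2:Fin 3) = 0) = False from by simp, show ((2:Fin 3) = 1) = False from by simp,
    show ((1:Fin 3) = 2) = False from by simp, show ((0:Fin 3) = 2) = False from by simp,
    if_false]
  ring

end PosLaurent
namespace PosLaurent

lemma good_step0 {v e} (h : Good v e) : Good (tau1 v) (upd 0 e) := by
  obtain ⟨h0, h1, h2, h3, h4, h5⟩ := h
  have key : M (upd 0 e 0) = A * (M (e 1) * M (e 2) / M (e 0)) := M_upd0 e
  have hr1 : upd 0 e 1 = e 1 := upd_row_other 0 1 (by decide) e
  have hr2 : upd 0 e 2 = e 2 := upd_row_other 0 2 (by decide) e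
  refine ⟨?_, ?_, ?_, ?_, ?_, ?_⟩ <;>
    simp only [tau1, show ((0:Fin 6) = 0) = True from by simp,
      show ((1:Fin 6) = 0) = False from by simp, show ((1:Fin 6) = 1) = True from by simp,
      show ((2:Fin 6) = 0) = False from by simp, show ((2:Fin 6) = 1) = False from by simp,
      show ((3:Fin 6) = 0) = False from by simp, show ((3:Fin 6) = 1) = False from by simp,
      show ((4:Fin 6) = 0) = False from by simp, show ((4:Fin 6) = 1) = False from by simp,
      show ((5:Fin 6) = 0) = False from by simp, show ((5:Fin 6) = 1) = False from by simp,
      if_true, if_false, hr1, hr2, key, h0, h1, h2, h3, h4, h5]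
  · rw [A]
    field_simp [x_ne, M_ne]
  · rw [A]
    field_simp [x_ne, M_ne]

lemma good_step1 {v e} (h : Good v e) : Good (tau2 v) (upd 1 e) := by
  obtain ⟨h0, h1, h2, h3, h4, h5⟩ := h
  have key : M (upd 1 e 1) = B * (M (e 0) * M (e 2) / M (e 1)) := M_upd1 e
  have hr0 : upd 1 e 0 = e 0 := upd_row_other 1 0 (by decide) e
  have hr2 : upd 1 e 2 = e 2 := upd_row_other 1 2 (by decide) e
  refine ⟨?_, ?_, ?_, ?_, ?_, ?_⟩ <;>
    simp only [tau2, show ((0:Fin 6) = 2) = False from by simp,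
      show ((0:Fin 6) = 3) = False from by simp, show ((1:Fin 6) = 2) = False from by simp,
      show ((1:Fin 6) = 3) = False from by simp, show ((2:Fin 6) = 2) = True from by simp,
      show ((3:Fin 6) = 2) = False from by simp, show ((3:Fin 6) = 3) = True from by simp,
      show ((4:Fin 6) = 2) = False from by simp, show ((4:Fin 6) = 3) = False from by simp,
      show ((5:Fin 6) = 2) = False from by simp, show ((5:Fin 6) = 3) = False from by simp,
      if_true, if_false, hr0, hr2, key, h0, h1, h2, h3, h4, h5]
  · rw [B]
    field_simp [x_ne, M_ne]
  · rw [B]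
    field_simp [x_ne, M_ne]

lemma good_step2 {v e} (h : Good v e) : Good (tau3 v) (upd 2 e) := by
  obtain ⟨h0, h1, h2, h3, h4, h5⟩ := h
  have key : M (upd 2 e 2) = C * (M (e 0) * M (e 1) / M (e 2)) := M_upd2 e
  have hr0 : upd 2 e 0 = e 0 := upd_row_other 2 0 (by decide) e
  have hr1 : upd 2 e 1 = e 1 := upd_row_other 2 1 (by decide) e
  refine ⟨?_, ?_, ?_, ?_, ?_, ?_⟩ <;>
    simp only [tau3, show ((0:Fin 6) = 4) = False from by simp,
      show ((0:Fin 6) = 5) = False from by simp, show ((1:Fin 6) = 4) = False from by simp,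
      show ((1:Fin 6) = 5) = False from by simp, show ((2:Fin 6) = 4) = False from by simp,
      show ((2:Fin 6) = 5) = False from by simp, show ((3:Fin 6) = 4) = False from by simp,
      show ((3:Fin 6) = 5) = False from by simp, show ((4:Fin 6) = 4) = True from by simp,
      show ((5:Fin 6) = 4) = False from by simp, show ((5:Fin 6) = 5) = True from by simp,
      if_true, if_false, hr0, hr1, key, h0, h1, h2, h3, h4, h5]
  · rw [C]
    field_simp [x_ne, M_ne]
  · rw [C]
    field_simp [x_ne, M_ne]

lemma good_step (a : Fin 3) {v e} (h : Good v e) : Good (tau a v) (upd a e) := by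
  fin_cases a
  · exact good_step0 h
  · exact good_step1 h
  · exact good_step2 h

end PosLaurent
namespace PosLaurent

/-- Quadratic invariant for generator `k`. -/
def Q (e : Fin 3 → Fin 3 → ℤ) (k : Fin 3) : ℤ :=
  (e 0 k)^2 + (e 1 k)^2 + (e 2 k)^2
    - e 0 k * e 1 k - e 1 k * e 2 k - e 2 k * e 0 k - e k k

lemma Q_upd (a : Fin 3) (e : Fin 3 → Fin 3 → ℤ) (k : Fin 3) : Q (upd a e) k = Q e k := by
  fin_cases a <;> fin_cases k <;>
    simp [Q, upd] <;> ring

lemma int_nonneg (p q r : ℤ) (h : p^2 + q^2 + r^2 - p*q - q*r - r*p - p = 0) :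
    0 ≤ p ∧ 0 ≤ q ∧ 0 ≤ r := by
  refine ⟨?_, ?_, ?_⟩ <;>
    nlinarith [sq_nonneg (p - q), sq_nonneg (q - r), sq_nonneg (r - p),
      sq_nonneg (p - q - 1), sq_nonneg (p - r - 1)]

lemma Q_nonneg (e : Fin 3 → Fin 3 → ℤ) (h : ∀ k, Q e k = 0) (i k : Fin 3) : 0 ≤ e i k := by
  have h0 := int_nonneg (e 0 0) (e 1 0) (e 2 0) (by have := h 0; simp only [Q] at this; linarith)
  have h1 := int_nonneg (e 1 1) (e 2 1) (e 0 1) (by have := h 1; simp only [Q] at this; linarith)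
  have h2 := int_nonneg (e 2 2) (e 0 2) (e 1 2) (by have := h 2; simp only [Q] at this; linarith)
  fin_cases i <;> fin_cases k <;>
    first
      | exact h0.1 | exact h0.2.1 | exact h0.2.2
      | exact h1.1 | exact h1.2.1 | exact h1.2.2
      | exact h2.1 | exact h2.2.1 | exact h2.2.2

lemma main_aux : ∀ (w : List (Fin 3)) (v : Fin 6 → K) (e : Fin 3 → Fin 3 → ℤ),
    Good v e → (∀ k, Q e k = 0) →
    ∃ e', (∀ k, Q e' k = 0) ∧ Good (applyWord w v) e'
  | [], v, e, hg, hq => ⟨e, hq, hg⟩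
  | a :: w, v, e, hg, hq => by
    have h1 : applyWord (a :: w) v = applyWord w (tau a v) := rfl
    rw [h1]
    exact main_aux w (tau a v) (upd a e) (good_step a hg)
      (fun k => (Q_upd a e k).trans (hq k))

lemma good_init : Good X0 (fun _ _ => (0:ℤ)) := by
  refine ⟨?_, ?_, ?_, ?_, ?_, ?_⟩ <;> simp [X0, M]

end PosLaurent
namespace PosLaurent

lemma final (i : Fin 6) (c : Fin 3 → ℤ) (hc : ∀ k, 0 ≤ c k) (v : K) (hv : v = x i * M c) :
    ∃ p : P, (∀ m, 0 ≤ p.coeff m) ∧ ∃ d : Fin 6 → ℕ,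
      v * ∏ j : Fin 6, x j ^ d j = algebraMap P K p := by
  have hn0 : ((c 0).toNat : ℤ) = c 0 := Int.toNat_of_nonneg (hc 0)
  have hn1 : ((c 1).toNat : ℤ) = c 1 := Int.toNat_of_nonneg (hc 1)
  have hn2 : ((c 2).toNat : ℤ) = c 2 := Int.toNat_of_nonneg (hc 2)
  set n0 := (c 0).toNat
  set n1 := (c 1).toNat
  set n2 := (c 2).toNat
  refine ⟨MvPolynomial.X i
      * (MvPolynomial.X 2 * MvPolynomial.X 4 + MvPolynomial.X 3 * MvPolynomial.X 5) ^ n0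
      * (MvPolynomial.X 1 * MvPolynomial.X 4 + MvPolynomial.X 0 * MvPolynomial.X 5) ^ n1
      * (MvPolynomial.X 0 * MvPolynomial.X 2 + MvPolynomial.X 1 * MvPolynomial.X 3) ^ n2,
    ?_, ![n0, n0, n1, n1, n2, n2], ?_⟩
  · exact (((Pos.X i).mul
      ((((Pos.X 2).mul (Pos.X 4)).add ((Pos.X 3).mul (Pos.X 5))).pow n0)).mul
      ((((Pos.X 1).mul (Pos.X 4)).add ((Pos.X 0).mul (Pos.X 5))).pow n1)).mul
      ((((Pos.X 0).mul (Pos.X 2)).add ((Pos.X 1).mul (Pos.X 3))).pow n2)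
  · rw [hv, M, show c 0 = ((n0:ℤ)) from hn0.symm, show c 1 = ((n1:ℤ)) from hn1.symm,
      show c 2 = ((n2:ℤ)) from hn2.symm, zpow_natCast, zpow_natCast, zpow_natCast]
    simp only [map_mul, map_pow, map_add, Fin.prod_univ_six,
      show ∀ j, algebraMap P K (MvPolynomial.X j) = x j from fun _ => rfl]
    norm_num [Matrix.cons_val_zero, Matrix.cons_val_one, Matrix.head_cons]
    rw [A, B, C]
    simp only [show (![n0, n0, n1, n1, n2, n2] : Fin 6 → ℕ) 2 = n1 from rfl,
      show (![n0, n0, n1, n1, n2, n2] : Fin 6 → ℕ) 3 = n1 from rfl,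
      show (![n0, n0, n1, n1, n2, n2] : Fin 6 → ℕ) 4 = n2 from rfl, div_pow, mul_pow]
    field_simp [x_ne]
    simp only [show (![n0, n0, n1, n1, n2, n2] : Fin 6 → ℕ) 5 = n2 from rfl]

end PosLaurent


/-- Positive Laurentness: every cluster variable produced by a τ-mutation
sequence is a Laurent polynomial with nonnegative coefficients in x₀,…,x₅. -/
theorem positive_laurent (w : List (Fin 3)) (i : Fin 6) :
    ∃ p : P, (∀ m, 0 ≤ p.coeff m) ∧
      ∃ d : Fin 6 → ℕ,
        applyWord w X0 i * ∏ j : Fin 6, x j ^ d j = algebraMap P K p := by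
  obtain ⟨e, hq, hg⟩ := PosLaurent.main_aux w X0 (fun _ _ => 0) PosLaurent.good_init
    (fun k => by simp [PosLaurent.Q])
  obtain ⟨g0, g1, g2, g3, g4, g5⟩ := hg
  fin_cases i
  · exact PosLaurent.final 0 (e 0) (fun k => PosLaurent.Q_nonneg e hq 0 k) _ g0
  · exact PosLaurent.final 1 (e 0) (fun k => PosLaurent.Q_nonneg e hq 0 k) _ g1
  · exact PosLaurent.final 2 (e 1) (fun k => PosLaurent.Q_nonneg e hq 1 k) _ g2
  · exact PosLaurent.final 3 (e 1) (fun k => PosLaurent.Q_nonneg e hq 1 k) _ g3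
  · exact PosLaurent.final 4 (e 2) (fun k => PosLaurent.Q_nonneg e hq 2 k) _ g4
  · exact PosLaurent.final 5 (e 2) (fun k => PosLaurent.Q_nonneg e hq 2 k) _ g5
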